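/- Let K_1, …, K_{r−1} ∈ ℝ^{n×n} be symmetric positive semi-definite matrices and K_r = I_n, and for ψ ∈ ℝ^r with ψ_j ≥ 0 for j < r and ψ_r > 0 let Σ(ψ) = Σ_{j=1}^{r} ψ_j K_j (which is positive definite). Set A_j(ψ) = Σ(ψ)^{-1/2} K_j Σ(ψ)^{-1/2} for j ∈ {1, …, r}, and let I(ψ) ∈ ℝ^{r×r} have entries I(ψ)_{ij} = tr(A_i(ψ)A_j(ψ))/2. Then I(ψ) is positive definite if and only if K_1, …, K_r are linearly independent in the vector space of n×n matrices. -/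

import Mathlib

open Matrix

open Classical in
/-- The positive semidefinite square root of a matrix (junk value `0` off the
positive semidefinite matrices). -/
noncomputable def msqrt {ι : Type*} [Fintype ι] [DecidableEq ι] (M : Matrix ι ι ℝ) :
    Matrix ι ι ℝ :=
  if h : M.PosSemidef then
    h.1.eigenvectorUnitary.1 * diagonal ((RCLike.ofReal : ℝ → ℝ) ∘ (√·) ∘ h.1.eigenvalues) *
      (star h.1.eigenvectorUnitary : Matrix ι ι ℝ)
  else 0


/-- The full family of variance-component matrices: `K_1, …, K_{r−1}` given, and
`K_r = I_n` (the last index). -/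
noncomputable def Kfull {n m : ℕ} (K : Fin m → Matrix (Fin n) (Fin n) ℝ)
    (j : Fin (m + 1)) : Matrix (Fin n) (Fin n) ℝ :=
  Fin.lastCases 1 K j

/-- `Σ(ψ) = ∑_j ψ_j K_j` in the variance components model. -/
noncomputable def SigmaVC {n m : ℕ} (K : Fin m → Matrix (Fin n) (Fin n) ℝ)
    (ψ : Fin (m + 1) → ℝ) : Matrix (Fin n) (Fin n) ℝ :=
  ∑ j, ψ j • Kfull K j

/-- `A_j(ψ) = Σ(ψ)^{-1/2} K_j Σ(ψ)^{-1/2}`. -/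
noncomputable def AjVC {n m : ℕ} (K : Fin m → Matrix (Fin n) (Fin n) ℝ)
    (ψ : Fin (m + 1) → ℝ) (j : Fin (m + 1)) : Matrix (Fin n) (Fin n) ℝ :=
  (msqrt (SigmaVC K ψ))⁻¹ * Kfull K j * (msqrt (SigmaVC K ψ))⁻¹

/-- The Fisher information matrix `I(ψ)_{ij} = tr(A_i(ψ) A_j(ψ))/2`. -/
noncomputable def infoVC {n m : ℕ} (K : Fin m → Matrix (Fin n) (Fin n) ℝ)
    (ψ : Fin (m + 1) → ℝ) : Matrix (Fin (m + 1)) (Fin (m + 1)) ℝ :=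
  Matrix.of fun i j => (AjVC K ψ i * AjVC K ψ j).trace / 2

lemma psd_smul {ι : Type*} [Fintype ι] {M : Matrix ι ι ℝ} (h : M.PosSemidef)
    {c : ℝ} (hc : 0 ≤ c) : (c • M).PosSemidef := by
  constructor
  · show (c • M)ᴴ = c • M
    rw [Matrix.conjTranspose_smul]
    rw [show Mᴴ = M from h.1.eq]
    simp
  · intro x
    exact (h.smul hc).2 x

lemma pd_smul {ι : Type*} [Fintype ι] {M : Matrix ι ι ℝ} (h : M.PosDef)
    {c : ℝ} (hc : 0 < c) : (c • M).PosDef := by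
  constructor
  · show (c • M)ᴴ = c • M
    rw [Matrix.conjTranspose_smul]
    rw [show Mᴴ = M from h.1.eq]
    simp
  · intro x hx
    exact (h.smul hc).2 hx

lemma Kfull_posSemidef {n m : ℕ} (K : Fin m → Matrix (Fin n) (Fin n) ℝ)
    (hK : ∀ j, (K j).PosSemidef) (j : Fin (m + 1)) : (Kfull K j).PosSemidef := by
  refine Fin.lastCases ?_ ?_ j
  · simpa [Kfull] using Matrix.PosSemidef.one
  · intro i; simpa [Kfull] using hK i

lemma sigma_posDef {n m : ℕ} (K : Fin m → Matrix (Fin n) (Fin n) ℝ)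
    (hK : ∀ j, (K j).PosSemidef)
    (ψ : Fin (m + 1) → ℝ) (hψ : ∀ j : Fin m, 0 ≤ ψ j.castSucc)
    (hψr : 0 < ψ (Fin.last m)) : (SigmaVC K ψ).PosDef := by
  have hsplit : SigmaVC K ψ
      = (∑ j : Fin m, ψ j.castSucc • K j) + ψ (Fin.last m) • (1 : Matrix (Fin n) (Fin n) ℝ) := by
    rw [SigmaVC, Fin.sum_univ_castSucc]
    simp [Kfull]
  rw [hsplit]
  refine Matrix.PosDef.posSemidef_add ?_ (pd_smul Matrix.PosDef.one hψr)
  refine Finset.sum_induction _ Matrix.PosSemidef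
    (fun a b ha hb => ha.add hb) (Matrix.PosSemidef.zero) ?_
  intro j _
  exact psd_smul (hK j) (hψ j)

/-- In the variance components model with `K_1, …, K_{r−1}` positive semi-definite,
`K_r = I_n`, `ψ_j ≥ 0` for `j < r` and `ψ_r > 0`, the Fisher information `I(ψ)` is
positive definite if and only if `K_1, …, K_r` are linearly independent. -/
theorem stmt9 {n m : ℕ} (K : Fin m → Matrix (Fin n) (Fin n) ℝ)
    (hK : ∀ j, (K j).PosSemidef)
    (ψ : Fin (m + 1) → ℝ) (hψ : ∀ j : Fin m, 0 ≤ ψ j.castSucc)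
    (hψr : 0 < ψ (Fin.last m)) :
    (infoVC K ψ).PosDef ↔ LinearIndependent ℝ (Kfull K) := by
  classical
  have hKf : ∀ j, (Kfull K j).PosSemidef := Kfull_posSemidef K hK
  have hSig : (SigmaVC K ψ).PosDef := sigma_posDef K hK ψ hψ hψr
  have hSigS : (SigmaVC K ψ).PosSemidef := hSig.posSemidef
  have hmsq : msqrt (SigmaVC K ψ) = hSigS.1.eigenvectorUnitary.1 * diagonal ((RCLike.ofReal : ℝ → ℝ) ∘ (√·) ∘ hSigS.1.eigenvalues) *
      (star hSigS.1.eigenvectorUnitary : Matrix (Fin n) (Fin n) ℝ) := by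
    unfold msqrt
    exact dif_pos hSigS
  set Q : Matrix (Fin n) (Fin n) ℝ := hSigS.1.eigenvectorUnitary.1 * diagonal ((RCLike.ofReal : ℝ → ℝ) ∘ (√·) ∘ hSigS.1.eigenvalues) *
      (star hSigS.1.eigenvectorUnitary : Matrix (Fin n) (Fin n) ℝ) with hQdef
  have hQ : Q.PosSemidef := by
    have hd : (diagonal ((RCLike.ofReal : ℝ → ℝ) ∘ (√·) ∘ hSigS.1.eigenvalues)).PosSemidef :=
      PosSemidef.diagonal fun i => Real.sqrt_nonneg _
    simpa [hQdef, Matrix.star_eq_conjTranspose] using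
      hd.mul_mul_conjTranspose_same (hSigS.1.eigenvectorUnitary.1)
  have hQQ : Q * Q = SigmaVC K ψ := by
    have hU := Unitary.coe_star_mul_self hSigS.1.eigenvectorUnitary
    have hev := hSigS.1.posSemidef_iff_eigenvalues_nonneg.1 hSigS
    conv_rhs => rw [hSigS.1.spectral_theorem, Unitary.conjStarAlgAut_apply]
    rw [hQdef]
    calc _ = hSigS.1.eigenvectorUnitary.1 * diagonal ((RCLike.ofReal : ℝ → ℝ) ∘ (√·) ∘ hSigS.1.eigenvalues) *
        ((star hSigS.1.eigenvectorUnitary : Matrix (Fin n) (Fin n) ℝ) * hSigS.1.eigenvectorUnitary.1) *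
        diagonal ((RCLike.ofReal : ℝ → ℝ) ∘ (√·) ∘ hSigS.1.eigenvalues) *
        (star hSigS.1.eigenvectorUnitary : Matrix (Fin n) (Fin n) ℝ) := by simp only [Matrix.mul_assoc]
      _ = _ := by
        rw [hU, Matrix.mul_one, Matrix.mul_assoc _ (diagonal _) (diagonal _), diagonal_mul_diagonal]
        congr 3
        funext i
        simp [Real.mul_self_sqrt (hev i)]
  have hdet : IsUnit Q.det := by
    rw [isUnit_iff_ne_zero]
    intro h0
    have hqq2 : Q.det * Q.det = (SigmaVC K ψ).det := by rw [← Matrix.det_mul, hQQ]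
    have hdp := hSig.det_pos
    rw [← hqq2, h0, mul_zero] at hdp
    exact lt_irrefl _ hdp
  set S : Matrix (Fin n) (Fin n) ℝ := Q⁻¹ with hSdef
  have hSherm : S.IsHermitian := hQ.1.inv
  have hQS : Q * S = 1 := Matrix.mul_nonsing_inv Q hdet
  have hSQ : S * Q = 1 := Matrix.nonsing_inv_mul Q hdet
  have hA : ∀ j, AjVC K ψ j = S * Kfull K j * S := by
    intro j; rw [AjVC, hmsq]
  have hAherm : ∀ j, (AjVC K ψ j).IsHermitian := by
    intro j
    rw [hA]
    have h1 := Matrix.isHermitian_conjTranspose_mul_mul S (hKf j).1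
    rwa [hSherm.eq] at h1
  have hBC : ∀ c : Fin (m + 1) → ℝ,
      (∑ j, c j • AjVC K ψ j) = S * (∑ j, c j • Kfull K j) * S := by
    intro c
    simp only [hA, Matrix.mul_sum, Matrix.sum_mul, Matrix.mul_smul, Matrix.smul_mul]
  have hBzero : ∀ c : Fin (m + 1) → ℝ,
      (∑ j, c j • AjVC K ψ j) = 0 ↔ (∑ j, c j • Kfull K j) = 0 := by
    intro c
    rw [hBC c]
    constructor
    · intro h
      set C := ∑ j, c j • Kfull K j with hCdef
      have h2 : Q * (S * C * S) * Q = 0 := by rw [h]; simp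
      calc C = 1 * C * 1 := by simp
        _ = (Q * S) * C * (S * Q) := by rw [hQS, hSQ]
        _ = Q * (S * C * S) * Q := by simp only [Matrix.mul_assoc]
        _ = 0 := h2
    · intro h; rw [h]; simp
  have hBherm : ∀ c : Fin (m + 1) → ℝ, (∑ j, c j • AjVC K ψ j).IsHermitian := by
    intro c
    show (∑ j, c j • AjVC K ψ j)ᴴ = _
    rw [Matrix.conjTranspose_sum]
    refine Finset.sum_congr rfl fun j _ => ?_
    rw [Matrix.conjTranspose_smul]
    rw [show (AjVC K ψ j)ᴴ = AjVC K ψ j from (hAherm j).eq]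
    simp
  have hquad : ∀ c : Fin (m + 1) → ℝ,
      dotProduct c ((infoVC K ψ) *ᵥ c)
        = Matrix.trace ((∑ j, c j • AjVC K ψ j) * (∑ j, c j • AjVC K ψ j)) / 2 := by
    intro c
    rw [Finset.sum_mul_sum]
    simp only [Matrix.smul_mul, Matrix.mul_smul, smul_smul, Matrix.trace_sum,
      Matrix.trace_smul, smul_eq_mul]
    simp only [infoVC, dotProduct, Matrix.mulVec, Matrix.of_apply]
    rw [Finset.sum_div]
    refine Finset.sum_congr rfl fun i _ => ?_
    rw [Finset.sum_div, Finset.mul_sum]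
    refine Finset.sum_congr rfl fun j _ => ?_
    ring
  have htr : ∀ (Bm : Matrix (Fin n) (Fin n) ℝ), Bm.IsHermitian →
      Matrix.trace (Bm * Bm) = ∑ i, ∑ j, (Bm i j) ^ 2 := by
    intro Bm hB
    simp only [Matrix.trace, Matrix.diag, Matrix.mul_apply]
    refine Finset.sum_congr rfl fun i _ => Finset.sum_congr rfl fun j _ => ?_
    have h1 : Bm j i = Bm i j := by
      have := hB.apply i j
      simpa using this
    rw [h1]; ring
  have hpos : ∀ (Bm : Matrix (Fin n) (Fin n) ℝ), Bm.IsHermitian → Bm ≠ 0 →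
      0 < Matrix.trace (Bm * Bm) := by
    intro Bm hB hB0
    rw [htr Bm hB]
    obtain ⟨i, j, hij⟩ : ∃ i j, Bm i j ≠ 0 := by
      by_contra h
      push_neg at h
      exact hB0 (Matrix.ext fun i j => h i j)
    refine Finset.sum_pos' (fun i _ => Finset.sum_nonneg fun j _ => sq_nonneg _)
      ⟨i, Finset.mem_univ i, ?_⟩
    refine Finset.sum_pos' (fun j _ => sq_nonneg _) ⟨j, Finset.mem_univ j, ?_⟩
    positivity
  have hstar : ∀ x : Fin (m + 1) → ℝ, star x = x := fun x => funext fun i => rfl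
  rw [Fintype.linearIndependent_iff]
  constructor
  · intro hPD g hg i
    by_contra hgi
    have hg0 : g ≠ 0 := fun h => hgi (by rw [h]; rfl)
    have hlt := hPD.dotProduct_mulVec_pos hg0
    rw [hstar g, hquad g, (hBzero g).2 hg] at hlt
    simp at hlt
  · intro hLI
    refine Matrix.PosDef.of_dotProduct_mulVec_pos ?_ ?_
    · show (infoVC K ψ)ᴴ = infoVC K ψ
      ext i j
      simp only [Matrix.conjTranspose_apply, infoVC, Matrix.of_apply, star_trivial]
      rw [Matrix.trace_mul_comm]
    · intro x hx
      rw [hstar x, hquad x]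
      have hBne : (∑ j, x j • AjVC K ψ j) ≠ 0 := by
        intro h0
        exact hx (funext fun i => hLI x ((hBzero x).1 h0) i)
      have := hpos _ (hBherm x) hBne
      linarith
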